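/- Let a ∈ ℝᵈ, b ∈ {-1, +1}, and define f(x) = log(1 + exp(-b·⟨a, x⟩)). Then for all x with ‖x‖ ≤ 1, the matrix inequality ∇²f(x) ⪰ exp(-‖a‖)·∇f(x)·∇f(x)ᵀ holds; hence f is exp(-‖a‖)-exp-concave on the unit ball. -/

import Mathlib

open RealInnerProductSpace

lemma g_concave (c : ℝ) (hc : 0 ≤ c) :
    ConcaveOn ℝ (Set.Icc (-c) c)
      (fun t : ℝ => (1 + Real.exp (-t)) ^ (-(Real.exp (-c)) : ℝ)) := by
  set α : ℝ := Real.exp (-c) with hα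
  have hαpos : 0 < α := Real.exp_pos _
  have hpos : ∀ t : ℝ, 0 < 1 + Real.exp (-t) := fun t => by positivity
  refine concaveOn_of_hasDerivWithinAt2_nonpos (f' := fun t =>
      α * Real.exp (-t) * (1 + Real.exp (-t)) ^ (-α - 1 : ℝ))
      (f'' := fun t =>
      -α * Real.exp (-t) * (1 + Real.exp (-t)) ^ (-α - 1 : ℝ)
        + α * Real.exp (-t) * ((α + 1) * Real.exp (-t)
          * (1 + Real.exp (-t)) ^ (-α - 2 : ℝ)))
      (convex_Icc _ _) ?_ ?_ ?_ ?_
  · exact ((continuous_const.add (Real.continuous_exp.comp continuous_neg)).rpow_const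
      (fun t => Or.inl (ne_of_gt (hpos t)))).continuousOn
  · intro t _
    have h1 : HasDerivAt (fun s : ℝ => 1 + Real.exp (-s)) (-Real.exp (-t)) t := by
      simpa using ((Real.hasDerivAt_exp (-t)).comp t (hasDerivAt_neg t)).const_add 1
    have h2 := h1.rpow_const (p := -α) (Or.inl (ne_of_gt (hpos t)))
    have : HasDerivAt (fun s : ℝ => (1 + Real.exp (-s)) ^ (-α : ℝ))
        (α * Real.exp (-t) * (1 + Real.exp (-t)) ^ (-α - 1 : ℝ)) t := by
      convert h2 using 1; ring
    exact this.hasDerivWithinAt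
  · intro t _
    have h1 : HasDerivAt (fun s : ℝ => 1 + Real.exp (-s)) (-Real.exp (-t)) t := by
      simpa using ((Real.hasDerivAt_exp (-t)).comp t (hasDerivAt_neg t)).const_add 1
    have hu : HasDerivAt (fun s : ℝ => α * Real.exp (-s)) (-α * Real.exp (-t)) t := by
      simpa [mul_comm, mul_assoc] using
        ((Real.hasDerivAt_exp (-t)).comp t (hasDerivAt_neg t)).const_mul α
    have hw : HasDerivAt (fun s : ℝ => (1 + Real.exp (-s)) ^ (-α - 1 : ℝ))
        ((α + 1) * Real.exp (-t) * (1 + Real.exp (-t)) ^ (-α - 2 : ℝ)) t := by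
      have := h1.rpow_const (p := -α - 1) (Or.inl (ne_of_gt (hpos t)))
      have heq : ((α + 1) * Real.exp (-t) * (1 + Real.exp (-t)) ^ (-α - 2 : ℝ))
          = -Real.exp (-t) * (-α - 1) * (1 + Real.exp (-t)) ^ (-α - 1 - 1 : ℝ) := by
        rw [show (-α - 1 - 1 : ℝ) = -α - 2 by ring]; ring
      rw [heq]; exact this
    have := hu.mul hw
    refine HasDerivAt.hasDerivWithinAt ?_
    convert this using 1
    all_goals rfl
  · intro t ht
    rw [interior_Icc] at ht
    have hkey : α * Real.exp (-t) ≤ 1 := by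
      have : -c - t ≤ 0 := by linarith [ht.1]
      calc α * Real.exp (-t) = Real.exp (-c - t) := by
            rw [hα, ← Real.exp_add]; ring_nf
        _ ≤ 1 := Real.exp_le_one_iff.mpr this
    have hsplit : (1 + Real.exp (-t)) ^ (-α - 1 : ℝ)
        = (1 + Real.exp (-t)) ^ (-α - 2 : ℝ) * (1 + Real.exp (-t)) := by
      rw [← Real.rpow_add_one (ne_of_gt (hpos t))]
      ring_nf
    rw [hsplit]
    have hrp : (0 : ℝ) ≤ (1 + Real.exp (-t)) ^ (-α - 2 : ℝ) :=
      Real.rpow_nonneg (le_of_lt (hpos t)) _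
    have he : (0 : ℝ) < Real.exp (-t) := Real.exp_pos _
    nlinarith [mul_pos hαpos he, mul_nonneg (mul_pos hαpos he).le hrp]

theorem stmt_5 {d : ℕ} (a : EuclideanSpace ℝ (Fin d)) (b : ℝ)
    (hb : b = -1 ∨ b = 1)
    (f : EuclideanSpace ℝ (Fin d) → ℝ)
    (hf : f = fun x => Real.log (1 + Real.exp (-b * ⟪a, x⟫))) :
    (∀ x : EuclideanSpace ℝ (Fin d), ‖x‖ ≤ 1 →
      ∀ v : EuclideanSpace ℝ (Fin d),
        Real.exp (-‖a‖) * (b * ⟪a, v⟫ / (1 + Real.exp (b * ⟪a, x⟫))) ^ 2 ≤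
          b ^ 2 * ⟪a, v⟫ ^ 2 * Real.exp (b * ⟪a, x⟫) /
            (1 + Real.exp (b * ⟪a, x⟫)) ^ 2) ∧
    ConcaveOn ℝ {x : EuclideanSpace ℝ (Fin d) | ‖x‖ ≤ 1}
      (fun x => Real.exp (-Real.exp (-‖a‖) * f x)) := by
  have hbabs : |b| = 1 := by rcases hb with h | h <;> simp [h]
  have hlow : ∀ x : EuclideanSpace ℝ (Fin d), ‖x‖ ≤ 1 → -‖a‖ ≤ b * ⟪a, x⟫ := by
    intro x hx
    have h1 : |b * ⟪a, x⟫| ≤ ‖a‖ := by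
      rw [abs_mul, hbabs, one_mul]
      calc |⟪a, x⟫| ≤ ‖a‖ * ‖x‖ := abs_real_inner_le_norm a x
        _ ≤ ‖a‖ := by nlinarith [norm_nonneg a]
    linarith [neg_abs_le (b * ⟪a, x⟫)]
  constructor
  · intro x hx v
    set t := b * ⟪a, x⟫ with htdef
    have het : Real.exp (-‖a‖) ≤ Real.exp t := Real.exp_le_exp.mpr (hlow x hx)
    have hden : (0 : ℝ) < (1 + Real.exp t) ^ 2 := by positivity
    have hnum : (0 : ℝ) ≤ (b * ⟪a, v⟫) ^ 2 := sq_nonneg _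
    have key : Real.exp (-‖a‖) * (b * ⟪a, v⟫) ^ 2 ≤ b ^ 2 * ⟪a, v⟫ ^ 2 * Real.exp t := by
      nlinarith [mul_le_mul_of_nonneg_left het hnum]
    rw [div_pow, ← mul_div_assoc]
    exact div_le_div_of_nonneg_right key hden.le
  · have hupper : {x : EuclideanSpace ℝ (Fin d) | ‖x‖ ≤ 1} ⊆
        (fun x : EuclideanSpace ℝ (Fin d) => b * ⟪a, x⟫) ⁻¹' Set.Icc (-‖a‖) ‖a‖ := by
      intro x hx
      simp only [Set.mem_preimage, Set.mem_Icc]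
      refine ⟨hlow x hx, ?_⟩
      have h1 : |b * ⟪a, x⟫| ≤ ‖a‖ := by
        rw [abs_mul, hbabs, one_mul]
        have hx1 : ‖x‖ ≤ 1 := hx
        calc |⟪a, x⟫| ≤ ‖a‖ * ‖x‖ := abs_real_inner_le_norm a x
          _ ≤ ‖a‖ := by nlinarith [norm_nonneg a, hx1]
      linarith [le_abs_self (b * ⟪a, x⟫)]
    have hgc := g_concave ‖a‖ (norm_nonneg a)
    have hfun : (fun x : EuclideanSpace ℝ (Fin d) =>
        Real.exp (-Real.exp (-‖a‖) * f x))
        = (fun t : ℝ => (1 + Real.exp (-t)) ^ (-(Real.exp (-‖a‖)) : ℝ)) ∘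
          (fun x => b * ⟪a, x⟫) := by
      funext x
      have hpos : (0 : ℝ) < 1 + Real.exp (-(b * ⟪a, x⟫)) := by positivity
      simp only [hf, Function.comp_apply, Real.rpow_def_of_pos hpos]
      rw [Real.exp_eq_exp]
      ring_nf
    rw [hfun]
    have hconv : Convex ℝ {x : EuclideanSpace ℝ (Fin d) | ‖x‖ ≤ 1} := by
      convert convex_closedBall (0 : EuclideanSpace ℝ (Fin d)) 1 using 1
      case e'_7 => ext x; simp [Metric.mem_closedBall, dist_zero_right]
      all_goals rfl
    refine ⟨hconv, ?_⟩
    intro x hx y hy s r hs hr hsr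
    have hLx := hupper hx
    have hLy := hupper hy
    simp only [Set.mem_preimage] at hLx hLy
    have hlin : b * ⟪a, s • x + r • y⟫ = s * (b * ⟪a, x⟫) + r * (b * ⟪a, y⟫) := by
      rw [inner_add_right, real_inner_smul_right, real_inner_smul_right]; ring
    simp only [Function.comp_apply, hlin]
    exact hgc.2 hLx hLy hs hr hsr
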